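/- Let T be a bounded linear operator on a Banach space X. If T² is convex-cyclic with convex-cyclic vector x, then T ⊕ (−T) is convex-cyclic on X ⊕ X with convex-cyclic vector (x, x). -/

import Mathlib

open Set

/-- A convex-cyclic operator has dense range. -/
lemma denseRange_of_convexCyclic
    {𝕜 : Type*} [RCLike 𝕜] {X : Type*} [NormedAddCommGroup X] [NormedSpace 𝕜 X]
    [NormedSpace ℝ X] [IsScalarTower ℝ 𝕜 X]
    (S : X →L[𝕜] X) (x : X)
    (hx : Dense (convexHull ℝ (Set.range fun n : ℕ => (S ^ n) x))) :
    DenseRange S := by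
  by_contra h
  rw [DenseRange, Dense] at h
  push_neg at h
  obtain ⟨p, hp⟩ := h
  have hconv : Convex ℝ (Set.range (⇑S)) := by
    rintro _ ⟨y, rfl⟩ _ ⟨z, rfl⟩ a b _ _ _
    exact ⟨a • y + b • z, by simp [map_add, ContinuousLinearMap.map_smul_of_tower]⟩
  obtain ⟨f, u, hfu, hup⟩ :=
    geometric_hahn_banach_closed_point hconv.closure isClosed_closure hp
  have h0 : (0 : ℝ) < u := by
    have := hfu 0 (subset_closure ⟨0, map_zero S⟩)
    simpa using this
  -- f is nonpositive on the range of S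
  have hkey : ∀ y : X, f (S y) ≤ 0 := by
    intro y
    by_contra hy
    push_neg at hy
    have hc : (0 : ℝ) < (u + 1) / f (S y) := by positivity
    have := hfu (S (((u + 1) / f (S y)) • y))
      (subset_closure ⟨((u + 1) / f (S y)) • y, rfl⟩)
    rw [ContinuousLinearMap.map_smul_of_tower, map_smul, smul_eq_mul,
      div_mul_cancel₀ _ (ne_of_gt hy)] at this
    linarith
  set M : ℝ := max (f x) 0 with hM
  have hsub : convexHull ℝ (Set.range fun n : ℕ => (S ^ n) x) ⊆ {y | f y ≤ M} := by
    apply convexHull_min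
    · rintro _ ⟨n, rfl⟩
      rcases n with _ | n
      · show f ((S ^ 0) x) ≤ M
        simp only [pow_zero, ContinuousLinearMap.one_apply]
        exact le_max_left _ _
      · have : (S ^ (n + 1)) x = S ((S ^ n) x) := by
          rw [pow_succ']; rfl
        simp only [Set.mem_setOf_eq, this]
        exact le_trans (hkey _) (le_max_right _ _)
    · exact convex_halfSpace_le ⟨map_add f, map_smul f⟩ M
  -- but density forces f to take values above M
  have hpne : (0 : ℝ) < f p := lt_trans h0 hup
  have hopen : IsOpen ((⇑f) ⁻¹' Set.Ioi M) := (isOpen_Ioi).preimage f.continuous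
  have hne : ((⇑f) ⁻¹' Set.Ioi M).Nonempty := by
    refine ⟨((M + 1) / f p) • p, ?_⟩
    have hM0 : (0 : ℝ) ≤ M := le_max_right _ _
    simp only [Set.mem_preimage, map_smul, smul_eq_mul, Set.mem_Ioi]
    rw [div_mul_cancel₀ _ (ne_of_gt hpne)]
    linarith
  obtain ⟨y, hy1, hy2⟩ := hx.exists_mem_open hopen hne
  have h1 : f y ≤ M := hsub hy1
  have h2 : M < f y := hy2
  linarith

/-- The linear map `(z, w) ↦ ((z + Tw)/2, (z - Tw)/2)`. -/
noncomputable def phiAux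
    {𝕜 : Type*} [RCLike 𝕜] {X : Type*} [NormedAddCommGroup X] [NormedSpace 𝕜 X]
    [NormedSpace ℝ X] [IsScalarTower ℝ 𝕜 X]
    (T : X →L[𝕜] X) : (X × X) →ₗ[ℝ] (X × X) where
  toFun p := ((1 / 2 : ℝ) • (p.1 + T p.2), (1 / 2 : ℝ) • (p.1 - T p.2))
  map_add' p q := by
    ext <;> simp [map_add, smul_add, smul_sub] <;> abel
  map_smul' c p := by
    ext <;> simp [ContinuousLinearMap.map_smul_of_tower, smul_add, smul_sub, smul_comm c]

lemma prodMap_pow_apply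
    {𝕜 : Type*} [RCLike 𝕜] {X : Type*} [NormedAddCommGroup X] [NormedSpace 𝕜 X]
    (A B : X →L[𝕜] X) (n : ℕ) : ∀ a b : X,
    ((A.prodMap B) ^ n) (a, b) = ((A ^ n) a, (B ^ n) b) := by
  induction n with
  | zero => simp
  | succ n ih =>
    intro a b
    rw [pow_succ, pow_succ, pow_succ]
    simp only [ContinuousLinearMap.mul_apply]
    rw [show (A.prodMap B) (a, b) = (A a, B b) from rfl, ih]

/-- If `T²` is convex-cyclic on a Banach space `X` with convex-cyclic vector `x`, then
`T ⊕ (-T)` is convex-cyclic on `X ⊕ X` with convex-cyclic vector `(x, x)`. -/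
theorem prod_neg_convexCyclic_of_sq_convexCyclic
    {𝕜 : Type*} [RCLike 𝕜] {X : Type*} [NormedAddCommGroup X] [NormedSpace 𝕜 X]
    [NormedSpace ℝ X] [IsScalarTower ℝ 𝕜 X] [CompleteSpace X]
    (T : X →L[𝕜] X) (x : X)
    (hx : Dense (convexHull ℝ (Set.range fun n : ℕ => ((T ^ 2) ^ n) x))) :
    Dense (convexHull ℝ (Set.range fun n : ℕ => ((T.prodMap (-T)) ^ n) (x, x))) := by
  classical
  set R : Set X := Set.range fun n : ℕ => ((T ^ 2) ^ n) x with hR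
  set g : ℕ → X × X := fun n : ℕ => ((T.prodMap (-T)) ^ n) (x, x) with hg
  set G : Set (X × X) := convexHull ℝ (Set.range g) with hG
  -- T has dense range
  have hT2 : DenseRange (T ^ 2 : X →L[𝕜] X) := denseRange_of_convexCyclic _ x hx
  have hTrange : Set.range (⇑(T ^ 2 : X →L[𝕜] X)) ⊆ Set.range (⇑T) := by
    rintro _ ⟨y, rfl⟩
    exact ⟨T y, by rw [pow_two]; rfl⟩
  have hT : DenseRange T := hT2.mono hTrange
  -- the key computation: g at even and odd indices
  have hgeven : ∀ m : ℕ, g (2 * m) = (((T ^ 2) ^ m) x, ((T ^ 2) ^ m) x) := by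
    intro m
    rw [hg]
    simp only [prodMap_pow_apply]
    rw [← pow_mul, Even.neg_pow (⟨m, by ring⟩ : Even (2 * m))]
  have hgodd : ∀ k : ℕ, g (2 * k + 1) = (T (((T ^ 2) ^ k) x), -T (((T ^ 2) ^ k) x)) := by
    intro k
    rw [hg]
    simp only [prodMap_pow_apply]
    have h1 : (T ^ (2 * k + 1)) x = T (((T ^ 2) ^ k) x) := by
      rw [← pow_mul, pow_succ']; rfl
    have h2 : ((-T) ^ (2 * k + 1)) x = -T (((T ^ 2) ^ k) x) := by
      rw [Odd.neg_pow (⟨k, by ring⟩ : Odd (2 * k + 1)), ContinuousLinearMap.neg_apply, h1]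
    rw [h1, h2]
  -- phi maps R ×ˢ R into G
  have hphi : (phiAux T) '' (R ×ˢ R) ⊆ G := by
    rintro _ ⟨⟨z, w⟩, ⟨⟨m, hm⟩, ⟨k, hk⟩⟩, rfl⟩
    simp only at hm hk
    have hzw : (phiAux T) (z, w) =
        (1 / 2 : ℝ) • g (2 * m) + (1 / 2 : ℝ) • g (2 * k + 1) := by
      rw [hgeven, hgodd, hm, hk]
      show ((1 / 2 : ℝ) • (z + T w), (1 / 2 : ℝ) • (z - T w)) = _
      simp only [Prod.smul_mk, Prod.mk_add_mk, Prod.mk.injEq, smul_add, smul_sub, smul_neg]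
      exact ⟨trivial, by abel⟩
    rw [hzw]
    exact (convex_convexHull ℝ (Set.range g))
      (subset_convexHull ℝ _ ⟨2 * m, rfl⟩) (subset_convexHull ℝ _ ⟨2 * k + 1, rfl⟩)
      (by norm_num) (by norm_num) (by norm_num)
  -- phi has dense range
  have hcont : Continuous (phiAux T) := by
    apply Continuous.prodMk
    · exact (continuous_fst.add (T.continuous.comp continuous_snd)).const_smul _
    · exact (continuous_fst.sub (T.continuous.comp continuous_snd)).const_smul _
  have hdr : DenseRange (phiAux T) := by
    rw [Metric.denseRange_iff]
    rintro ⟨p, q⟩ r hr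
    obtain ⟨w, hw⟩ := Metric.denseRange_iff.mp hT (p - q) (2 * r) (by linarith)
    rw [dist_eq_norm] at hw
    refine ⟨(p + q, w), ?_⟩
    have key : ‖(1 / 2 : ℝ) • (p - q) - (1 / 2 : ℝ) • T w‖ < r := by
      rw [← smul_sub, norm_smul, Real.norm_eq_abs,
        show |(1 / 2 : ℝ)| = 1 / 2 by norm_num]
      linarith
    have h1 : dist p ((phiAux T) (p + q, w)).1 < r := by
      show dist p ((1 / 2 : ℝ) • (p + q + T w)) < r
      rw [dist_eq_norm]
      have hcalc : p - (1 / 2 : ℝ) • (p + q + T w) =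
          (1 / 2 : ℝ) • (p - q) - (1 / 2 : ℝ) • T w := by module
      rw [hcalc]; exact key
    have h2 : dist q ((phiAux T) (p + q, w)).2 < r := by
      show dist q ((1 / 2 : ℝ) • (p + q - T w)) < r
      rw [dist_eq_norm]
      have hcalc : q - (1 / 2 : ℝ) • (p + q - T w) =
          -((1 / 2 : ℝ) • (p - q) - (1 / 2 : ℝ) • T w) := by module
      rw [hcalc, norm_neg]; exact key
    rw [Prod.dist_eq, max_lt_iff]
    exact ⟨h1, h2⟩
  -- D × D is the convex hull of R × R
  have hDD : Dense ((convexHull ℝ R) ×ˢ (convexHull ℝ R)) := hx.prod hx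
  rw [← convexHull_prod] at hDD
  -- image under phi is dense and contained in G
  have himg : Dense ((phiAux T) '' (convexHull ℝ (R ×ˢ R))) :=
    hdr.dense_image hcont hDD
  rw [LinearMap.image_convexHull] at himg
  have hsubG : convexHull ℝ ((phiAux T) '' (R ×ˢ R)) ⊆ G :=
    convexHull_min hphi (convex_convexHull ℝ _)
  exact himg.mono hsubG
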